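/- arXiv:2504.09850 — 5 statements merged into one kernel-verified Lean document; each statement's English description precedes it below -/
import Mathlib

section
/- For every real number λ with |λ| ≤ 1/4, one has exp(−λ) / √(1 − 2λ) ≤ exp(2λ²). -/
open Real

lemma key_exp_ineq (l : ℝ) (hl : |l| ≤ 1 / 4) :
    Real.exp (-(2 * l) - 4 * l ^ 2) ≤ 1 - 2 * l := by
  obtain ⟨h1, h2⟩ := abs_le.mp hl
  have h12 : (0:ℝ) < 1 - 2 * l := by linarith
  rcases le_or_gt l 0 with hneg | hpos
  · -- exp(t) ≥ 1 + t with t = 2l + 4l², then (1-2l)(1+t) = 1 - 8l³ ≥ 1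
    have ht : 2 * l + 4 * l ^ 2 + 1 ≤ Real.exp (2 * l + 4 * l ^ 2) :=
      Real.add_one_le_exp _
    have hpos' : (0:ℝ) < 2 * l + 4 * l ^ 2 + 1 := by nlinarith
    have : Real.exp (-(2 * l) - 4 * l ^ 2) ≤ 1 / (2 * l + 4 * l ^ 2 + 1) := by
      rw [show -(2*l) - 4*l^2 = -(2*l + 4*l^2) by ring, Real.exp_neg]
      exact one_div_le_one_div_of_le hpos' ht |>.trans_eq' (by rw [one_div]) |>.trans
        (by rw [one_div])
    refine this.trans ?_
    rw [div_le_iff₀ hpos']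
    nlinarith [sq_nonneg l, mul_nonneg (mul_nonneg (neg_nonneg.mpr hneg) (neg_nonneg.mpr hneg)) (neg_nonneg.mpr hneg)]
  · -- exp(t) ≥ 1 + t + t²/2 + t³/6
    set t := 2 * l + 4 * l ^ 2 with htdef
    have ht0 : 0 ≤ t := by nlinarith
    have hsum : 1 + t + t ^ 2 / 2 + t ^ 3 / 6 ≤ Real.exp t := by
      have := Real.sum_le_exp_of_nonneg ht0 4
      simp [Finset.sum_range_succ, Nat.factorial] at this
      nlinarith [this]
    have hP : (0:ℝ) < 1 + t + t ^ 2 / 2 + t ^ 3 / 6 := by nlinarith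
    have : Real.exp (-(2 * l) - 4 * l ^ 2) ≤ 1 / (1 + t + t ^ 2 / 2 + t ^ 3 / 6) := by
      rw [show -(2*l) - 4*l^2 = -t by rw [htdef]; ring, Real.exp_neg]
      exact (one_div_le_one_div_of_le hP hsum).trans_eq' (by rw [one_div])
    refine this.trans ?_
    rw [div_le_iff₀ hP, htdef]
    nlinarith [sq_nonneg l, sq_nonneg (l - 1/4), pow_pos hpos 3, pow_pos hpos 4, sq_nonneg (l*(l-1/4))]

/-- Scalar analytic inequality behind the chi-squared MGF bound: for `|λ| ≤ 1/4`,
`exp(-λ) / √(1 - 2λ) ≤ exp(2λ²)`. -/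
theorem exp_div_sqrt_le_exp_sq (l : ℝ) (hl : |l| ≤ 1 / 4) :
    Real.exp (-l) / Real.sqrt (1 - 2 * l) ≤ Real.exp (2 * l ^ 2) := by
  obtain ⟨h1, h2⟩ := abs_le.mp hl
  have h12 : (0:ℝ) < 1 - 2 * l := by linarith
  have hsqrt : 0 < Real.sqrt (1 - 2 * l) := Real.sqrt_pos.mpr h12
  rw [div_le_iff₀ hsqrt]
  have key := key_exp_ineq l hl
  -- exp(-l) ≤ exp(2l²) * sqrt(1-2l)  ⟺  exp(-l-2l²) ≤ sqrt(1-2l)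
  have h3 : Real.exp (-l - 2 * l ^ 2) ≤ Real.sqrt (1 - 2 * l) := by
    rw [Real.le_sqrt (Real.exp_pos _).le]
    calc Real.exp (-l - 2 * l ^ 2) ^ 2 = Real.exp (-(2*l) - 4*l^2) := by
          rw [sq, ← Real.exp_add]; ring_nf
      _ ≤ 1 - 2 * l := key
    exact h12.le
  calc Real.exp (-l) = Real.exp (2 * l ^ 2) * Real.exp (-l - 2 * l ^ 2) := by
        rw [← Real.exp_add]; ring_nf
    _ ≤ Real.exp (2 * l ^ 2) * Real.sqrt (1 - 2 * l) :=
        mul_le_mul_of_nonneg_left h3 (Real.exp_pos _).le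
end

section
/- Let x₁, …, xₙ be independent random vectors in ℝ^d (n ≥ 1) with E[x_i] = 0 for each i, and assume ‖x_i‖ ≤ R almost surely for each i, where R > 0 and ‖·‖ is the Euclidean norm. Then for every q ∈ [0, √n], P( ‖(1/n)·Σ_{i=1}^n x_i‖ ≥ R(1 + q)/√n ) ≤ exp(−q²/4). -/
open MeasureTheory ProbabilityTheory Real

set_option linter.unusedVariables false
set_option linter.unnecessarySimpa false
set_option linter.unnecessarySeqFocus false

lemma exp_le_one_add_quad {u : ℝ} (hu : |u| ≤ 1) :
    Real.exp u ≤ 1 + u + (3/4) * u^2 := by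
  have h := Real.exp_bound hu (n := 2) (by norm_num)
  have hsum : ∑ m ∈ Finset.range 2, u ^ m / m.factorial = 1 + u := by
    simp [Finset.sum_range_succ]
  rw [hsum] at h
  have h2 : Real.exp u - (1 + u) ≤ |u| ^ 2 * ((2+1) / (2 * 2)) := by
    calc Real.exp u - (1+u) ≤ |Real.exp u - (1+u)| := le_abs_self _
    _ ≤ |u| ^ 2 * ((2+1) / (2 * 2)) := by
        convert h using 2 <;> norm_num [Nat.factorial]
  have : |u| ^ 2 = u ^ 2 := sq_abs u
  nlinarith [sq_abs u]

noncomputable def condF {d : ℕ} (ν : ℕ → Measure (EuclideanSpace ℝ (Fin d))) :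
    ℕ → EuclideanSpace ℝ (Fin d) → ℝ
  | 0, s => ‖s‖
  | (m+1), s => ∫ a, condF (fun j => ν (j+1)) m (s + a) ∂(ν 0)

variable {d : ℕ} {R : ℝ}

lemma condF_props (hR : 0 ≤ R) :
    ∀ (m : ℕ) (ν : ℕ → Measure (EuclideanSpace ℝ (Fin d))),
      (∀ j, IsProbabilityMeasure (ν j)) → (∀ j, ∀ᵐ a ∂ν j, ‖a‖ ≤ R) →
      LipschitzWith 1 (condF ν m) ∧ (∀ s, |condF ν m s| ≤ ‖s‖ + m * R)
        ∧ (∀ s, 0 ≤ condF ν m s) := by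
  intro m
  induction m with
  | zero =>
    intro ν _ _
    refine ⟨lipschitzWith_one_norm, fun s => ?_, fun s => norm_nonneg s⟩
    simp [condF, abs_of_nonneg (norm_nonneg s)]
  | succ m ih =>
    intro ν hprob hsupp
    haveI := hprob 0
    set ν' : ℕ → Measure (EuclideanSpace ℝ (Fin d)) := fun j => ν (j+1) with hν'
    obtain ⟨hlip, hbd, hnn⟩ := ih ν' (fun j => hprob (j+1)) (fun j => hsupp (j+1))
    -- integrability of the integrand for every s
    have hint : ∀ s : EuclideanSpace ℝ (Fin d),
        Integrable (fun a => condF ν' m (s + a)) (ν 0) := by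
      intro s
      refine Integrable.mono' (integrable_const (‖s‖ + R + m * R)) ?_ ?_
      · exact (hlip.continuous.comp (continuous_add_left s)).aestronglyMeasurable
      · filter_upwards [hsupp 0] with a ha
        calc ‖condF ν' m (s + a)‖ = |condF ν' m (s + a)| := rfl
        _ ≤ ‖s + a‖ + m * R := hbd _
        _ ≤ ‖s‖ + R + m * R := by
            have := norm_add_le s a; linarith
    have hshow : ∀ s, condF ν (m+1) s = ∫ a, condF ν' m (s + a) ∂(ν 0) := fun s => rfl
    refine ⟨?_, ?_, ?_⟩
    · refine LipschitzWith.of_dist_le_mul fun s s' => ?_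
      rw [hshow, hshow, Real.dist_eq, ← integral_sub (hint s) (hint s')]
      push_cast
      rw [one_mul]
      have : ‖∫ a, (condF ν' m (s + a) - condF ν' m (s' + a)) ∂(ν 0)‖ ≤
          dist s s' * ((ν 0) Set.univ).toReal := by
        refine norm_integral_le_of_norm_le_const ?_
        refine Filter.Eventually.of_forall fun a => ?_
        have := hlip.dist_le_mul (s + a) (s' + a)
        simpa [Real.dist_eq, dist_eq_norm] using this
      simpa using this
    · intro s
      rw [hshow]
      have : ‖∫ a, condF ν' m (s + a) ∂(ν 0)‖ ≤ (‖s‖ + R + m * R) * ((ν 0) Set.univ).toReal := by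
        refine norm_integral_le_of_norm_le_const ?_
        filter_upwards [hsupp 0] with a ha
        calc ‖condF ν' m (s + a)‖ = |condF ν' m (s + a)| := rfl
        _ ≤ ‖s + a‖ + m * R := hbd _
        _ ≤ ‖s‖ + R + m * R := by have := norm_add_le s a; linarith
      rw [Real.norm_eq_abs] at this
      simp only [measure_univ, ENNReal.toReal_one, mul_one] at this
      calc |∫ a, condF ν' m (s + a) ∂(ν 0)| ≤ ‖s‖ + R + m * R := this
      _ ≤ ‖s‖ + (m+1 : ℕ) * R := by push_cast; linarith
    · intro s
      rw [hshow]
      exact integral_nonneg fun a => hnn _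

lemma condF_sq_le (hR : 0 ≤ R) :
    ∀ (m : ℕ) (ν : ℕ → Measure (EuclideanSpace ℝ (Fin d))),
      (∀ j, IsProbabilityMeasure (ν j)) → (∀ j, ∀ᵐ a ∂ν j, ‖a‖ ≤ R) →
      (∀ j, ∫ a, a ∂ν j = 0) →
      ∀ s, (condF ν m s)^2 ≤ ‖s‖^2 + m * R^2 := by
  intro m
  induction m with
  | zero => intro ν _ _ _ s; simp [condF]
  | succ m ih =>
    intro ν hprob hsupp hmean s
    haveI := hprob 0
    set ν' : ℕ → Measure (EuclideanSpace ℝ (Fin d)) := fun j => ν (j+1) with hν'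
    obtain ⟨hlip, hbd, hnn⟩ := condF_props hR m ν' (fun j => hprob (j+1)) (fun j => hsupp (j+1))
    have ihs := ih ν' (fun j => hprob (j+1)) (fun j => hsupp (j+1)) (fun j => hmean (j+1))
    set f : EuclideanSpace ℝ (Fin d) → ℝ := fun a => condF ν' m (s + a) with hf
    have hfmeas : AEStronglyMeasurable f (ν 0) :=
      (hlip.continuous.comp (continuous_add_left s)).aestronglyMeasurable
    have hfbd : ∀ᵐ a ∂(ν 0), ‖f a‖ ≤ ‖s‖ + R + m * R := by
      filter_upwards [hsupp 0] with a ha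
      calc ‖f a‖ = |condF ν' m (s + a)| := rfl
      _ ≤ ‖s + a‖ + m * R := hbd _
      _ ≤ ‖s‖ + R + m * R := by have := norm_add_le s a; linarith
    have hfL2 : MemLp f 2 (ν 0) := MemLp.of_bound hfmeas _ hfbd
    have hfint : Integrable f (ν 0) := Integrable.mono' (integrable_const _) hfmeas hfbd
    have hshow : condF ν (m+1) s = ∫ a, f a ∂(ν 0) := rfl
    -- Cauchy-Schwarz: (∫ f)² ≤ ∫ f²
    have hCS : (∫ a, f a ∂(ν 0))^2 ≤ ∫ a, (f a)^2 ∂(ν 0) := by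
      have hv := variance_nonneg f (ν 0)
      rw [variance_eq_sub hfL2] at hv
      have : ∫ a, (f^2) a ∂(ν 0) = ∫ a, (f a)^2 ∂(ν 0) := by simp [Pi.pow_apply]
      linarith [hv, this ▸ hv]
    -- integrand bounds
    have hsqmeas : AEStronglyMeasurable (fun a => (f a)^2) (ν 0) :=
      (hfmeas.mul hfmeas).congr (Filter.Eventually.of_forall fun a => (sq (f a)).symm)
    have hsq_int : Integrable (fun a => (f a)^2) (ν 0) := by
      refine Integrable.mono' (integrable_const ((‖s‖ + R + m * R)^2)) hsqmeas ?_
      filter_upwards [hfbd] with a ha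
      have h0 : (0:ℝ) ≤ ‖s‖ + R + m * R := le_trans (norm_nonneg (f a)) ha
      have hne : ‖(f a)^2‖ = ‖f a‖^2 := by
        rw [Real.norm_eq_abs, Real.norm_eq_abs, ← abs_pow]
      rw [hne]
      nlinarith [norm_nonneg (f a)]
    have hnormsq_int : Integrable (fun a : EuclideanSpace ℝ (Fin d) => ‖s + a‖^2) (ν 0) := by
      refine Integrable.mono' (integrable_const ((‖s‖ + R)^2)) ?_ ?_
      · exact ((continuous_norm.comp (continuous_add_left s)).pow 2).aestronglyMeasurable
      · filter_upwards [hsupp 0] with a ha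
        have h1 : ‖s + a‖ ≤ ‖s‖ + R := by have := norm_add_le s a; linarith
        have h2 : (0:ℝ) ≤ ‖s + a‖ := norm_nonneg _
        calc ‖‖s + a‖^2‖ = ‖s+a‖^2 := by rw [Real.norm_eq_abs, abs_of_nonneg (sq_nonneg _)]
        _ ≤ (‖s‖ + R)^2 := by nlinarith
    have hmono : ∫ a, (f a)^2 ∂(ν 0) ≤ ∫ a, (‖s + a‖^2 + m * R^2) ∂(ν 0) := by
      refine integral_mono hsq_int (hnormsq_int.add (integrable_const _)) fun a => ?_
      exact ihs (s + a)
    -- compute ∫ ‖s+a‖²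
    have hid_int : Integrable (fun a : EuclideanSpace ℝ (Fin d) => a) (ν 0) := by
      refine Integrable.mono' (integrable_const R) aestronglyMeasurable_id (by filter_upwards [hsupp 0] with a ha using ha)
    have hinner_int : Integrable (fun a : EuclideanSpace ℝ (Fin d) => (inner ℝ s a : ℝ)) (ν 0) := by
      refine Integrable.mono' (integrable_const (‖s‖ * R)) ?_ ?_
      · exact (continuous_const.inner continuous_id).aestronglyMeasurable
      · filter_upwards [hsupp 0] with a ha
        calc ‖(inner ℝ s a : ℝ)‖ ≤ ‖s‖ * ‖a‖ := norm_inner_le_norm s a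
        _ ≤ ‖s‖ * R := by have := norm_nonneg s; nlinarith
    have hnormsq2_int : Integrable (fun a : EuclideanSpace ℝ (Fin d) => ‖a‖^2) (ν 0) := by
      refine Integrable.mono' (integrable_const (R^2)) ((continuous_norm.pow 2).aestronglyMeasurable) ?_
      filter_upwards [hsupp 0] with a ha
      have h2 : (0:ℝ) ≤ ‖a‖ := norm_nonneg _
      calc ‖‖a‖^2‖ = ‖a‖^2 := by rw [Real.norm_eq_abs, abs_of_nonneg (sq_nonneg _)]
      _ ≤ R^2 := by nlinarith
    have hexpand : ∫ a, ‖s + a‖^2 ∂(ν 0) ≤ ‖s‖^2 + R^2 := by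
      have heq : ∀ a : EuclideanSpace ℝ (Fin d),
          ‖s + a‖^2 = ‖s‖^2 + 2 * (inner ℝ s a : ℝ) + ‖a‖^2 := fun a => norm_add_sq_real s a
      rw [integral_congr_ae (Filter.Eventually.of_forall heq)]
      have e1 : ∫ a, (‖s‖^2 + 2 * (inner ℝ s a : ℝ) + ‖a‖^2) ∂(ν 0)
          = (∫ a, (‖s‖^2 + 2 * (inner ℝ s a : ℝ)) ∂(ν 0)) + ∫ a, ‖a‖^2 ∂(ν 0) :=
        integral_add ((integrable_const _).add (hinner_int.const_mul 2)) hnormsq2_int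
      have e2 : ∫ a, (‖s‖^2 + 2 * (inner ℝ s a : ℝ)) ∂(ν 0)
          = (∫ (_ : EuclideanSpace ℝ (Fin d)), (‖s‖^2 : ℝ) ∂(ν 0)) + ∫ a, 2 * (inner ℝ s a : ℝ) ∂(ν 0) :=
        integral_add (integrable_const _) (hinner_int.const_mul 2)
      rw [e1, e2]
      have h1 : ∫ a, 2 * (inner ℝ s a : ℝ) ∂(ν 0) = 0 := by
        rw [integral_const_mul]
        have : ∫ a, (inner ℝ s a : ℝ) ∂(ν 0) = (inner ℝ s (∫ a, a ∂(ν 0)) : ℝ) :=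
          integral_inner hid_int s
        rw [this, hmean 0, inner_zero_right, mul_zero]
      have h2 : ∫ a, ‖a‖^2 ∂(ν 0) ≤ R^2 := by
        have : ‖∫ a, ‖a‖^2 ∂(ν 0)‖ ≤ R^2 * ((ν 0) Set.univ).toReal := by
          refine norm_integral_le_of_norm_le_const ?_
          filter_upwards [hsupp 0] with a ha
          have h2 : (0:ℝ) ≤ ‖a‖ := norm_nonneg _
          calc ‖‖a‖^2‖ = ‖a‖^2 := by rw [Real.norm_eq_abs, abs_of_nonneg (sq_nonneg _)]
          _ ≤ R^2 := by nlinarith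
        simp only [measure_univ, ENNReal.toReal_one, mul_one] at this
        exact le_trans (le_abs_self _) this
      simp only [integral_const, probReal_univ, measure_univ, ENNReal.toReal_one, smul_eq_mul, one_mul]
      linarith
    have hconst : ∫ (_ : EuclideanSpace ℝ (Fin d)), (m * R^2 : ℝ) ∂(ν 0) = m * R^2 := by
      simp
    rw [hshow]
    calc (∫ a, f a ∂(ν 0))^2 ≤ ∫ a, (f a)^2 ∂(ν 0) := hCS
    _ ≤ ∫ a, (‖s + a‖^2 + m * R^2) ∂(ν 0) := hmono
    _ = (∫ a, ‖s + a‖^2 ∂(ν 0)) + m * R^2 := by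
        rw [integral_add hnormsq_int (integrable_const _), hconst]
    _ ≤ ‖s‖^2 + R^2 + m * R^2 := by linarith
    _ = ‖s‖^2 + (m+1 : ℕ) * R^2 := by push_cast; ring

lemma hoeffding_step {d : ℕ} {R t : ℝ} (ν : Measure (EuclideanSpace ℝ (Fin d)))
    [IsProbabilityMeasure ν] (hR : 0 ≤ R) (ht : 0 ≤ t) (htR : 2 * t * R ≤ 1)
    (hsupp : ∀ᵐ a ∂ν, ‖a‖ ≤ R) (f : EuclideanSpace ℝ (Fin d) → ℝ)
    (hf : LipschitzWith 1 f) :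
    ∫ a, Real.exp (t * f a) ∂ν ≤ (1 + (3/4) * t^2 * R^2) * Real.exp (t * ∫ a, f a ∂ν) := by
  have hfabs : ∀ a b : EuclideanSpace ℝ (Fin d), |f a - f b| ≤ ‖a - b‖ := by
    intro a b
    have := hf.dist_le_mul a b
    simpa [Real.dist_eq, dist_eq_norm] using this
  have hfmeas : AEStronglyMeasurable f ν := hf.continuous.aestronglyMeasurable
  have hfbd : ∀ᵐ a ∂ν, ‖f a‖ ≤ |f 0| + R := by
    filter_upwards [hsupp] with a ha
    have h1 := hfabs a 0
    rw [Real.norm_eq_abs]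
    simp only [sub_zero] at h1
    have h2 := abs_sub_abs_le_abs_sub (f a) (f 0)
    linarith
  have hfint : Integrable f ν := Integrable.mono' (integrable_const _) hfmeas hfbd
  set m := ∫ a, f a ∂ν with hm
  have hm0 : |m - f 0| ≤ R := by
    have he : m - f 0 = ∫ a, (f a - f 0) ∂ν := by
      rw [integral_sub hfint (integrable_const _)]; simp; exact hm
    rw [he]
    have hb : ‖∫ a, (f a - f 0) ∂ν‖ ≤ R * (ν Set.univ).toReal := by
      refine norm_integral_le_of_norm_le_const ?_
      filter_upwards [hsupp] with a ha
      rw [Real.norm_eq_abs]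
      have := hfabs a 0; simp only [sub_zero] at this; linarith
    simpa using hb
  set Z : EuclideanSpace ℝ (Fin d) → ℝ := fun a => f a - m with hZ
  have hZint : Integrable Z ν := hfint.sub (integrable_const _)
  have hZmean : ∫ a, Z a ∂ν = 0 := by
    rw [hZ]
    rw [integral_sub hfint (integrable_const _)]
    simp [hm]
  have hZbdd : ∀ᵐ a ∂ν, |Z a| ≤ 2 * R := by
    filter_upwards [hsupp] with a ha
    have h1 := hfabs a 0; simp only [sub_zero] at h1
    have h2 : |Z a| ≤ |f a - f 0| + |f 0 - m| := by
      have : Z a = (f a - f 0) + (f 0 - m) := by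
        show f a - m = (f a - f 0) + (f 0 - m); ring
      rw [this]; exact abs_add_le _ _
    rw [abs_sub_comm] at hm0
    linarith
  have hZmeas : AEStronglyMeasurable Z ν := hfmeas.sub aestronglyMeasurable_const
  have hZsqmeas : AEStronglyMeasurable (fun a => (Z a)^2) ν :=
    (hZmeas.mul hZmeas).congr (Filter.Eventually.of_forall fun a => (sq (Z a)).symm)
  have hZsqint : Integrable (fun a => (Z a)^2) ν := by
    refine Integrable.mono' (integrable_const ((2*R)^2)) hZsqmeas ?_
    filter_upwards [hZbdd] with a ha
    rw [Real.norm_eq_abs, abs_of_nonneg (sq_nonneg _)]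
    nlinarith [sq_abs (Z a), abs_nonneg (Z a)]
  -- variance bound : ∫ Z² ≤ R²
  have hfsqmeas : AEStronglyMeasurable (fun a => (f a - f 0)^2) ν := by
    have h1 : AEStronglyMeasurable (fun a => f a - f 0) ν := hfmeas.sub aestronglyMeasurable_const
    exact (h1.mul h1).congr (Filter.Eventually.of_forall fun a => (sq _).symm)
  have hfsqint : Integrable (fun a => (f a - f 0)^2) ν := by
    refine Integrable.mono' (integrable_const (R^2)) hfsqmeas ?_
    filter_upwards [hsupp] with a ha
    rw [Real.norm_eq_abs, abs_of_nonneg (sq_nonneg _)]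
    have h1 := hfabs a 0; simp only [sub_zero] at h1
    nlinarith [sq_abs (f a - f 0), abs_nonneg (f a - f 0)]
  have hvar : ∫ a, (Z a)^2 ∂ν ≤ R^2 := by
    have he : ∀ a, (f a - f 0)^2 = (Z a)^2 + (2*(m - f 0)) * Z a + (m - f 0)^2 := by
      intro a; simp only [hZ]; ring
    have e0 : ∫ a, (f a - f 0)^2 ∂ν
        = ∫ a, ((Z a)^2 + (2*(m - f 0)) * Z a + (m - f 0)^2) ∂ν :=
      integral_congr_ae (Filter.Eventually.of_forall fun a => by simpa using he a)
    have e1 : ∫ a, ((Z a)^2 + (2*(m - f 0)) * Z a + (m - f 0)^2) ∂ν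
        = (∫ a, ((Z a)^2 + (2*(m - f 0)) * Z a) ∂ν) + ∫ (_ : EuclideanSpace ℝ (Fin d)), ((m - f 0)^2 : ℝ) ∂ν :=
      integral_add (hZsqint.add (hZint.const_mul _)) (integrable_const _)
    have e2 : ∫ a, ((Z a)^2 + (2*(m - f 0)) * Z a) ∂ν
        = (∫ a, (Z a)^2 ∂ν) + (2*(m - f 0)) * ∫ a, Z a ∂ν := by
      rw [integral_add hZsqint (hZint.const_mul _), integral_const_mul]
    have e3 : ∫ a, (f a - f 0)^2 ∂ν ≤ R^2 := by
      have hb : ‖∫ a, (f a - f 0)^2 ∂ν‖ ≤ R^2 * (ν Set.univ).toReal := by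
        refine norm_integral_le_of_norm_le_const ?_
        filter_upwards [hsupp] with a ha
        rw [Real.norm_eq_abs, abs_of_nonneg (sq_nonneg _)]
        have h1 := hfabs a 0; simp only [sub_zero] at h1
        nlinarith [abs_nonneg (f a - f 0), sq_abs (f a - f 0)]
      rw [Real.norm_eq_abs] at hb
      simp only [measure_univ, ENNReal.toReal_one, mul_one] at hb
      exact le_trans (le_abs_self _) hb
    rw [e0, e1, e2, hZmean] at e3
    simp only [mul_zero, add_zero, integral_const, probReal_univ, measure_univ, ENNReal.toReal_one,
      smul_eq_mul, one_mul] at e3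
    nlinarith [sq_nonneg (m - f 0)]
  -- pointwise exponential bound
  have hpt : ∀ᵐ a ∂ν, Real.exp (t * f a)
      ≤ Real.exp (t * m) * (1 + t * Z a + (3/4) * (t * Z a)^2) := by
    filter_upwards [hZbdd] with a ha
    have hu : |t * Z a| ≤ 1 := by
      rw [abs_mul, abs_of_nonneg ht]
      calc t * |Z a| ≤ t * (2 * R) := by nlinarith
      _ ≤ 1 := by linarith
    have h1 : Real.exp (t * Z a) ≤ 1 + t * Z a + (3/4) * (t * Z a)^2 :=
      exp_le_one_add_quad hu
    have h2 : t * f a = t * m + t * Z a := by simp only [hZ]; ring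
    rw [h2, Real.exp_add]
    have := Real.exp_pos (t * m)
    nlinarith
  -- integrate
  have hexpint : Integrable (fun a => Real.exp (t * f a)) ν := by
    refine Integrable.mono' (integrable_const (Real.exp (t * (|f 0| + R)))) ?_ ?_
    · exact (Real.continuous_exp.comp (continuous_const.mul hf.continuous)).aestronglyMeasurable
    · filter_upwards [hfbd] with a ha
      rw [Real.norm_eq_abs, abs_of_pos (Real.exp_pos _), Real.exp_le_exp]
      rw [Real.norm_eq_abs] at ha
      nlinarith [le_abs_self (f a)]
  have hrhsint : Integrable (fun a => Real.exp (t * m) * (1 + t * Z a + (3/4) * (t * Z a)^2)) ν := by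
    have : Integrable (fun a => 1 + t * Z a + (3/4) * (t * Z a)^2) ν := by
      have h1 : Integrable (fun a => (3/4) * (t * Z a)^2) ν := by
        have : Integrable (fun a => (Z a)^2) ν := hZsqint
        have h2 := (this.const_mul ((3/4) * t^2))
        exact h2.congr (Filter.Eventually.of_forall fun a => by ring)
      exact ((integrable_const 1).add (hZint.const_mul t)).add h1
    exact this.const_mul _
  have hint1 : ∫ a, Real.exp (t * f a) ∂ν
      ≤ ∫ a, Real.exp (t * m) * (1 + t * Z a + (3/4) * (t * Z a)^2) ∂ν :=
    integral_mono_ae hexpint hrhsint hpt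
  have hint2 : ∫ a, Real.exp (t * m) * (1 + t * Z a + (3/4) * (t * Z a)^2) ∂ν
      = Real.exp (t * m) * (1 + (3/4) * t^2 * ∫ a, (Z a)^2 ∂ν) := by
    rw [integral_const_mul]
    congr 1
    have e1 : ∫ a, (1 + t * Z a + (3/4) * (t * Z a)^2) ∂ν
        = (∫ a, (1 + t * Z a) ∂ν) + ∫ a, (3/4) * (t * Z a)^2 ∂ν := by
      refine integral_add ((integrable_const 1).add (hZint.const_mul t)) ?_
      exact ((hZsqint.const_mul ((3/4) * t^2))).congr (Filter.Eventually.of_forall fun a => by ring)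
    have e2 : ∫ a, (1 + t * Z a) ∂ν = 1 + t * ∫ a, Z a ∂ν := by
      rw [integral_add (integrable_const 1) (hZint.const_mul t), integral_const_mul]
      simp
    have e3 : ∫ a, (3/4) * (t * Z a)^2 ∂ν = (3/4) * t^2 * ∫ a, (Z a)^2 ∂ν := by
      rw [← integral_const_mul]
      exact integral_congr_ae (Filter.Eventually.of_forall fun a => by ring)
    rw [e1, e2, e3, hZmean]
    ring
  have hfin : Real.exp (t * m) * (1 + (3/4) * t^2 * ∫ a, (Z a)^2 ∂ν)
      ≤ (1 + (3/4) * t^2 * R^2) * Real.exp (t * m) := by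
    have h1 := Real.exp_pos (t * m)
    have h2 : 0 ≤ ∫ a, (Z a)^2 ∂ν := integral_nonneg fun a => sq_nonneg _
    have h3 : (3/4) * t^2 * (∫ a, (Z a)^2 ∂ν) ≤ (3/4) * t^2 * R^2 :=
      mul_le_mul_of_nonneg_left hvar (by positivity)
    nlinarith
  calc ∫ a, Real.exp (t * f a) ∂ν ≤ _ := hint1
  _ = _ := hint2
  _ ≤ _ := hfin

set_option maxHeartbeats 1000000 in
/-- Vector Bernstein inequality (Lemma A.3): if `x₁, …, xₙ` are independent mean-zero
random vectors in `ℝ^d` with `‖xᵢ‖ ≤ R` almost surely, then for every `q ∈ [0, √n]`,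
`P(‖(1/n) Σ xᵢ‖ ≥ R(1+q)/√n) ≤ exp(-q²/4)`. -/
theorem vector_bernstein {Ω : Type*} [MeasurableSpace Ω] (P : Measure Ω)
    [IsProbabilityMeasure P] (d n : ℕ) (hn : 1 ≤ n) (R : ℝ) (hR : 0 < R)
    (x : Fin n → Ω → EuclideanSpace ℝ (Fin d))
    (hmeas : ∀ i, Measurable (x i))
    (hindep : iIndepFun x P)
    (hmean : ∀ i, ∫ ω, x i ω ∂P = 0)
    (hbdd : ∀ i, ∀ᵐ ω ∂P, ‖x i ω‖ ≤ R)
    (q : ℝ) (hq0 : 0 ≤ q) (hqn : q ≤ Real.sqrt n) :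
    P {ω | R * (1 + q) / Real.sqrt n ≤ ‖(n : ℝ)⁻¹ • ∑ i, x i ω‖} ≤
      ENNReal.ofReal (Real.exp (-q ^ 2 / 4)) := by
  classical
  -- truncation to the ball of radius R
  set proj : EuclideanSpace ℝ (Fin d) → EuclideanSpace ℝ (Fin d) := fun v => if ‖v‖ ≤ R then v else (R * ‖v‖⁻¹) • v with hproj
  have hprojmeas : Measurable proj := by
    refine Measurable.ite (measurableSet_le measurable_norm measurable_const)
      measurable_id ?_
    exact (measurable_norm.inv.const_mul R).smul measurable_id
  have hprojbd : ∀ v, ‖proj v‖ ≤ R := by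
    intro v
    by_cases h : ‖v‖ ≤ R
    · simpa [hproj, h] using h
    · push_neg at h
      have hv : ‖v‖ ≠ 0 := ne_of_gt (lt_trans hR h)
      simp only [hproj, if_neg (not_le.mpr h), norm_smul, Real.norm_eq_abs]
      rw [abs_of_nonneg (by positivity)]
      rw [mul_assoc, inv_mul_cancel₀ hv, mul_one]
  have hprojid : ∀ v, ‖v‖ ≤ R → proj v = v := fun v h => by simp [hproj, h]
  set x' : Fin n → Ω → EuclideanSpace ℝ (Fin d) := fun i => proj ∘ x i with hx'
  have hx'meas : ∀ i, Measurable (x' i) := fun i => hprojmeas.comp (hmeas i)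
  have hxx' : ∀ i, x i =ᵐ[P] x' i := by
    intro i
    filter_upwards [hbdd i] with ω hω
    exact (hprojid _ hω).symm
  have hindep' : iIndepFun x' P :=
    hindep.comp (fun _ => proj) (fun _ => hprojmeas)
  have hx'mean : ∀ i, ∫ ω, x' i ω ∂P = 0 := fun i =>
    (integral_congr_ae (hxx' i).symm).trans (hmean i)
  have hx'bd : ∀ i ω, ‖x' i ω‖ ≤ R := fun i ω => hprojbd _
  -- laws, padded by dirac
  set μ : ℕ → Measure (EuclideanSpace ℝ (Fin d)) := fun k => if h : k < n then P.map (x' ⟨k, h⟩) else Measure.dirac 0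
    with hμ
  have hμprob : ∀ k, IsProbabilityMeasure (μ k) := by
    intro k
    by_cases h : k < n
    · simp only [hμ, dif_pos h]
      exact Measure.isProbabilityMeasure_map (hx'meas _).aemeasurable
    · simp only [hμ, dif_neg h]
      infer_instance
  have hball : MeasurableSet {a : EuclideanSpace ℝ (Fin d) | ‖a‖ ≤ R} :=
    measurableSet_le measurable_norm measurable_const
  have hμsupp : ∀ k, ∀ᵐ a ∂μ k, ‖a‖ ≤ R := by
    intro k
    by_cases h : k < n
    · simp only [hμ, dif_pos h]
      rw [ae_map_iff (hx'meas _).aemeasurable hball]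
      exact Filter.Eventually.of_forall fun ω => hx'bd _ _
    · simp only [hμ, dif_neg h]
      rw [ae_dirac_iff hball]
      simpa using hR.le
  have hμmean : ∀ k, ∫ a, a ∂μ k = 0 := by
    intro k
    by_cases h : k < n
    · simp only [hμ, dif_pos h]
      have hid : AEStronglyMeasurable (fun a : EuclideanSpace ℝ (Fin d) => a)
          (P.map (x' ⟨k, h⟩)) := aestronglyMeasurable_id
      rw [integral_map (hx'meas _).aemeasurable hid]
      exact hx'mean _
    · simp only [hμ, dif_neg h]
      simp
  -- partial sums
  set S : ℕ → Ω → EuclideanSpace ℝ (Fin d) :=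
    fun k => ∑ j ∈ Finset.univ.filter (fun j : Fin n => (j : ℕ) < k), x' j with hS
  have hSapp : ∀ k ω, S k ω = ∑ j ∈ Finset.univ.filter (fun j : Fin n => (j : ℕ) < k), x' j ω :=
    fun k ω => Finset.sum_apply ω _ _
  have hSmeas : ∀ k, Measurable (S k) := by
    intro k
    have h1 : Measurable fun ω => ∑ j ∈ Finset.univ.filter (fun j : Fin n => (j : ℕ) < k), x' j ω :=
      Finset.measurable_sum _ fun j _ => hx'meas j
    have h2 : S k = fun ω => ∑ j ∈ Finset.univ.filter (fun j : Fin n => (j : ℕ) < k), x' j ω :=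
      funext fun ω => hSapp k ω
    rw [h2]; exact h1
  have hSbd : ∀ k ω, ‖S k ω‖ ≤ n * R := by
    intro k ω
    rw [hSapp]
    calc ‖∑ j ∈ Finset.univ.filter (fun j : Fin n => (j : ℕ) < k), x' j ω‖
        ≤ ∑ j ∈ Finset.univ.filter (fun j : Fin n => (j : ℕ) < k), ‖x' j ω‖ :=
          norm_sum_le _ _
    _ ≤ ∑ j ∈ Finset.univ.filter (fun j : Fin n => (j : ℕ) < k), R :=
          Finset.sum_le_sum fun j _ => hx'bd j ω
    _ = (Finset.univ.filter (fun j : Fin n => (j : ℕ) < k)).card * R := by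
          rw [Finset.sum_const, nsmul_eq_mul]
    _ ≤ n * R := by
          have hc : (Finset.univ.filter (fun j : Fin n => (j : ℕ) < k)).card ≤ n := by
            calc _ ≤ (Finset.univ : Finset (Fin n)).card := Finset.card_filter_le _ _
            _ = n := Finset.card_univ.trans (Fintype.card_fin n)
          have hcr : ((Finset.univ.filter (fun j : Fin n => (j : ℕ) < k)).card : ℝ) ≤ n := by
            exact_mod_cast hc
          nlinarith
  -- the exponential parameter
  have hn0 : (0:ℝ) < n := by exact_mod_cast hn
  have hsq : 0 < Real.sqrt n := Real.sqrt_pos.mpr hn0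
  have hsn : Real.sqrt n * Real.sqrt n = (n:ℝ) := Real.mul_self_sqrt hn0.le
  set t : ℝ := q / (2 * R * Real.sqrt n) with htdef
  have ht : 0 ≤ t := div_nonneg hq0 (by positivity)
  have htR : 2 * t * R ≤ 1 := by
    have h1 : 2 * t * R = q / Real.sqrt n := by
      rw [htdef]; field_simp
    rw [h1, div_le_one hsq]; exact hqn
  set β : ℝ := (3/4) * t^2 * R^2 with hβ
  have hβ0 : 0 ≤ β := by positivity
  -- the conditional-expectation functions
  set F : ℕ → EuclideanSpace ℝ (Fin d) → ℝ :=
    fun k => condF (fun j => μ (k + j)) (n - k) with hF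
  -- key induction
  have key : ∀ k, k ≤ n →
      ∫ ω, Real.exp (t * F k (S k ω)) ∂P ≤ (1 + β)^k * Real.exp (t * F 0 0) := by
    intro k
    induction k with
    | zero =>
      intro _
      have hS0 : ∀ ω, S 0 ω = 0 := by
        intro ω; rw [hSapp]
        have : Finset.univ.filter (fun j : Fin n => (j : ℕ) < 0) = ∅ := by
          ext j; simp
        simp [this]
      have : ∀ ω, Real.exp (t * F 0 (S 0 ω)) = Real.exp (t * F 0 0) := by
        intro ω; rw [hS0]
      rw [integral_congr_ae (Filter.Eventually.of_forall this)]
      simp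
    | succ k ih =>
      intro hk1
      have hk : k < n := hk1
      have ihk := ih (le_of_lt hk)
      set ik : Fin n := ⟨k, hk⟩ with hik
      -- recursion for F
      have hν : (fun j => μ (k + (j+1))) = (fun j => μ ((k+1) + j)) :=
        funext fun j => congrArg μ (by omega)
      have hμk : μ k = P.map (x' ik) := by simp only [hμ, dif_pos hk]; rfl
      have hrec : ∀ s, F k s = ∫ a, F (k+1) (s + a) ∂(P.map (x' ik)) := by
        intro s
        have hnk : n - k = (n - (k+1)) + 1 := by omega
        calc F k s = condF (fun j => μ (k + j)) ((n - (k+1)) + 1) s := by rw [hF, ← hnk]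
        _ = ∫ a, condF (fun j => μ (k + (j+1))) (n - (k+1)) (s + a) ∂(μ (k + 0)) := rfl
        _ = ∫ a, F (k+1) (s + a) ∂(P.map (x' ik)) := by
            rw [hν, show k + 0 = k from rfl, hμk, hF]
      -- properties of F (k+1) and F k
      obtain ⟨hglip, hgbd, hgnn⟩ := condF_props hR.le (n - (k+1)) (fun j => μ ((k+1) + j))
        (fun j => hμprob _) (fun j => hμsupp _)
      obtain ⟨hFklip, hFkbd, hFknn⟩ := condF_props hR.le (n - k) (fun j => μ (k + j))
        (fun j => hμprob _) (fun j => hμsupp _)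
      haveI : IsProbabilityMeasure (P.map (S k)) :=
        Measure.isProbabilityMeasure_map (hSmeas k).aemeasurable
      haveI : IsProbabilityMeasure (P.map (x' ik)) :=
        Measure.isProbabilityMeasure_map (hx'meas ik).aemeasurable
      -- the two-variable function
      set H : EuclideanSpace ℝ (Fin d) × EuclideanSpace ℝ (Fin d) → ℝ :=
        fun p => Real.exp (t * F (k+1) (p.1 + p.2)) with hH
      have hHcont : Continuous H := by
        refine Real.continuous_exp.comp (continuous_const.mul ?_)
        have : Continuous (F (k+1)) := by rw [hF]; exact hglip.continuous
        exact this.comp (continuous_fst.add continuous_snd)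
      -- step 1 : rewrite the integral using S (k+1) = S k + x' ik
      have hfilter : Finset.univ.filter (fun j : Fin n => (j : ℕ) < k + 1)
          = insert ik (Finset.univ.filter (fun j : Fin n => (j : ℕ) < k)) := by
        ext j
        simp only [Finset.mem_filter, Finset.mem_insert, Finset.mem_univ, true_and]
        constructor
        · intro hj
          rcases Nat.lt_succ_iff_lt_or_eq.mp hj with h | h
          · exact Or.inr h
          · exact Or.inl (Fin.ext h)
        · rintro (h | h)
          · rw [h]; exact Nat.lt_succ_self k
          · exact Nat.lt_succ_of_lt h
      have hnotmem : ik ∉ Finset.univ.filter (fun j : Fin n => (j : ℕ) < k) := by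
        simp [hik]
      have hSsucc : ∀ ω, S (k+1) ω = S k ω + x' ik ω := by
        intro ω
        rw [hSapp, hSapp, hfilter, Finset.sum_insert hnotmem, add_comm]
      have e1 : ∫ ω, Real.exp (t * F (k+1) (S (k+1) ω)) ∂P
          = ∫ ω, H (S k ω, x' ik ω) ∂P := by
        refine integral_congr_ae (Filter.Eventually.of_forall fun ω => ?_)
        exact congrArg (fun v => Real.exp (t * F (k+1) v)) (hSsucc ω)
      -- step 2 : push to the product measure
      have hAB : IndepFun (S k) (x' ik) P := by
        have := hindep'.indepFun_finsetSum_of_notMem hx'meas hnotmem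
        exact this
      have hmap : P.map (fun ω => (S k ω, x' ik ω)) = (P.map (S k)).prod (P.map (x' ik)) :=
        (indepFun_iff_map_prod_eq_prod_map_map (hSmeas k).aemeasurable
          (hx'meas ik).aemeasurable).mp hAB
      have e2 : ∫ ω, H (S k ω, x' ik ω) ∂P
          = ∫ p, H p ∂((P.map (S k)).prod (P.map (x' ik))) := by
        rw [← hmap]
        exact (integral_map ((hSmeas k).prodMk (hx'meas ik)).aemeasurable
          hHcont.aestronglyMeasurable).symm
      -- integrability of H on the product
      have hprodsupp : ∀ᵐ p ∂((P.map (S k)).prod (P.map (x' ik))),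
          ‖p.1‖ ≤ n * R ∧ ‖p.2‖ ≤ R := by
        have hA : ∀ᵐ s ∂(P.map (S k)), ‖s‖ ≤ n * R := by
          rw [ae_map_iff (hSmeas k).aemeasurable
            (measurableSet_le measurable_norm measurable_const)]
          exact Filter.Eventually.of_forall fun ω => hSbd k ω
        have hB : ∀ᵐ a ∂(P.map (x' ik)), ‖a‖ ≤ R := by
          rw [ae_map_iff (hx'meas ik).aemeasurable hball]
          exact Filter.Eventually.of_forall fun ω => hx'bd ik ω
        rw [ae_iff]
        refine measure_mono_null (fun p hp => ?_)
          (?_ : ((P.map (S k)).prod (P.map (x' ik)))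
            (({s | ¬ ‖s‖ ≤ n * R} ×ˢ Set.univ) ∪ (Set.univ ×ˢ {a | ¬ ‖a‖ ≤ R})) = 0)
        · simp only [Set.mem_setOf_eq, not_and_or] at hp
          rcases hp with h | h
          · exact Or.inl ⟨h, Set.mem_univ _⟩
          · exact Or.inr ⟨Set.mem_univ _, h⟩
        · refine measure_union_null ?_ ?_
          · rw [Measure.prod_prod]
            rw [ae_iff] at hA
            rw [hA, zero_mul]
          · rw [Measure.prod_prod]
            rw [ae_iff] at hB
            rw [hB, mul_zero]
      have hHint : Integrable H ((P.map (S k)).prod (P.map (x' ik))) := by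
        refine Integrable.mono'
          (integrable_const (Real.exp (t * ((n*R + R) + ((n - (k+1) : ℕ) : ℝ) * R))))
          hHcont.aestronglyMeasurable ?_
        filter_upwards [hprodsupp] with p hp
        rw [Real.norm_eq_abs, abs_of_pos (Real.exp_pos _), Real.exp_le_exp]
        refine mul_le_mul_of_nonneg_left ?_ ht
        have h1 : |F (k+1) (p.1 + p.2)| ≤ ‖p.1 + p.2‖ + ((n - (k+1) : ℕ) : ℝ) * R := hgbd _
        have h2 : ‖p.1 + p.2‖ ≤ n * R + R := by
          have := norm_add_le p.1 p.2; have := hp.1; have := hp.2; linarith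
        have h3 := le_abs_self (F (k+1) (p.1 + p.2))
        linarith
      have e3 : ∫ p, H p ∂((P.map (S k)).prod (P.map (x' ik)))
          = ∫ s, ∫ a, H (s, a) ∂(P.map (x' ik)) ∂(P.map (S k)) :=
        MeasureTheory.integral_prod H hHint
      -- step 3 : inner Hoeffding bound, for every s
      have hBsupp : ∀ᵐ a ∂(P.map (x' ik)), ‖a‖ ≤ R := by
        rw [ae_map_iff (hx'meas ik).aemeasurable hball]
        exact Filter.Eventually.of_forall fun ω => hx'bd ik ω
      have hinner : ∀ s, ∫ a, H (s, a) ∂(P.map (x' ik))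
          ≤ (1 + β) * Real.exp (t * F k s) := by
        intro s
        have hlips : LipschitzWith 1 (fun a => F (k+1) (s + a)) := by
          refine LipschitzWith.of_dist_le_mul fun a b => ?_
          have h1 : LipschitzWith 1 (F (k+1)) := by rw [hF]; exact hglip
          calc dist (F (k+1) (s + a)) (F (k+1) (s + b)) ≤ 1 * dist (s + a) (s + b) :=
            h1.dist_le_mul _ _
          _ = 1 * dist a b := by rw [dist_add_left]
        have hstep := hoeffding_step (P.map (x' ik)) hR.le ht htR hBsupp _ hlips
        rw [hβ, hrec s]
        exact hstep
      -- step 4 : outer integral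
      have hout_int : Integrable (fun s => ∫ a, H (s, a) ∂(P.map (x' ik))) (P.map (S k)) :=
        hHint.integral_prod_left
      have hFkcont : Continuous (F k) := by rw [hF]; exact hFklip.continuous
      have hrhs_int : Integrable (fun s => (1 + β) * Real.exp (t * F k s)) (P.map (S k)) := by
        refine Integrable.const_mul ?_ _
        refine Integrable.mono'
          (integrable_const (Real.exp (t * (n*R + ((n - k : ℕ) : ℝ) * R))))
          (Real.continuous_exp.comp (continuous_const.mul hFkcont)).aestronglyMeasurable ?_
        have hA : ∀ᵐ s ∂(P.map (S k)), ‖s‖ ≤ n * R := by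
          rw [ae_map_iff (hSmeas k).aemeasurable
            (measurableSet_le measurable_norm measurable_const)]
          exact Filter.Eventually.of_forall fun ω => hSbd k ω
        filter_upwards [hA] with s hs
        rw [Real.norm_eq_abs, abs_of_pos (Real.exp_pos _), Real.exp_le_exp]
        refine mul_le_mul_of_nonneg_left ?_ ht
        have h1 : |F k s| ≤ ‖s‖ + ((n - k : ℕ) : ℝ) * R := hFkbd _
        have h3 := le_abs_self (F k s)
        linarith
      have e4 : ∫ s, ∫ a, H (s, a) ∂(P.map (x' ik)) ∂(P.map (S k))
          ≤ ∫ s, (1 + β) * Real.exp (t * F k s) ∂(P.map (S k)) :=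
        integral_mono hout_int hrhs_int hinner
      have e5 : ∫ s, (1 + β) * Real.exp (t * F k s) ∂(P.map (S k))
          = (1 + β) * ∫ ω, Real.exp (t * F k (S k ω)) ∂P := by
        rw [integral_const_mul]
        congr 1
        exact integral_map (hSmeas k).aemeasurable
          (Real.continuous_exp.comp (continuous_const.mul hFkcont)).aestronglyMeasurable
      calc ∫ ω, Real.exp (t * F (k+1) (S (k+1) ω)) ∂P
          = ∫ s, ∫ a, H (s, a) ∂(P.map (x' ik)) ∂(P.map (S k)) := by rw [e1, e2, e3]
      _ ≤ (1 + β) * ∫ ω, Real.exp (t * F k (S k ω)) ∂P := by rw [← e5]; exact e4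
      _ ≤ (1 + β) * ((1 + β)^k * Real.exp (t * F 0 0)) := by
          refine mul_le_mul_of_nonneg_left ihk (by linarith)
      _ = (1 + β)^(k+1) * Real.exp (t * F 0 0) := by ring
  -- bound on the expected norm
  have hM2 : (F 0 0)^2 ≤ ‖(0 : EuclideanSpace ℝ (Fin d))‖^2 + n * R^2 :=
    condF_sq_le hR.le n (fun j => μ (0 + j)) (fun j => hμprob _) (fun j => hμsupp _)
      (fun j => hμmean _) 0
  have hMnn : 0 ≤ F 0 0 :=
    (condF_props hR.le n (fun j => μ (0 + j)) (fun j => hμprob _) (fun j => hμsupp _)).2.2 0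
  have hM : F 0 0 ≤ R * Real.sqrt n := by
    have h0 : ‖(0 : EuclideanSpace ℝ (Fin d))‖^2 = 0 := by simp
    have hM2' : (F 0 0)^2 ≤ n * R^2 := by rw [h0, zero_add] at hM2; exact hM2
    have hins : (R * Real.sqrt n)^2 = n * R^2 := by
      rw [mul_pow, Real.sq_sqrt hn0.le]; ring
    have h5 : F 0 0 = Real.sqrt ((F 0 0)^2) := (Real.sqrt_sq hMnn).symm
    rw [h5]
    calc Real.sqrt ((F 0 0)^2) ≤ Real.sqrt (n * R^2) := Real.sqrt_le_sqrt hM2'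
    _ = R * Real.sqrt n := by rw [← hins, Real.sqrt_sq (by positivity)]
  -- F n is the norm
  have hFn : ∀ s, F n s = ‖s‖ := by
    intro s
    show condF (fun j => μ (n + j)) (n - n) s = ‖s‖
    rw [Nat.sub_self]
    rfl
  -- the mgf bound for the norm of the full sum
  have keyn := key n le_rfl
  have hXmeas : AEStronglyMeasurable (fun ω => Real.exp (t * ‖S n ω‖)) P := by
    have : Measurable fun ω => Real.exp (t * ‖S n ω‖) :=
      Real.measurable_exp.comp ((hSmeas n).norm.const_mul t)
    exact this.aestronglyMeasurable
  have hXint : Integrable (fun ω => Real.exp (t * ‖S n ω‖)) P := by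
    refine Integrable.mono' (integrable_const (Real.exp (t * (n * R)))) hXmeas ?_
    refine Filter.Eventually.of_forall fun ω => ?_
    rw [Real.norm_eq_abs, abs_of_pos (Real.exp_pos _), Real.exp_le_exp]
    exact mul_le_mul_of_nonneg_left (hSbd n ω) ht
  have hmgf : mgf (fun ω => ‖S n ω‖) P t ≤ (1 + β)^n * Real.exp (t * F 0 0) := by
    have h1 : mgf (fun ω => ‖S n ω‖) P t = ∫ ω, Real.exp (t * ‖S n ω‖) ∂P := rfl
    have h2 : ∫ ω, Real.exp (t * ‖S n ω‖) ∂P = ∫ ω, Real.exp (t * F n (S n ω)) ∂P := by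
      refine integral_congr_ae (Filter.Eventually.of_forall fun ω => ?_)
      exact congrArg (fun r => Real.exp (t * r)) (hFn (S n ω)).symm
    rw [h1, h2]; exact keyn
  set ε : ℝ := R * (1 + q) * Real.sqrt n with hεdef
  have hmark := measure_ge_le_exp_mul_mgf (μ := P) (X := fun ω => ‖S n ω‖) ε ht hXint
  -- numeric computations
  have hc : (2 * R * Real.sqrt n)^2 = 4 * R^2 * n := by
    rw [mul_pow, mul_pow, Real.sq_sqrt hn0.le]; ring
  have hb : t^2 = q^2 / (4 * R^2 * n) := by rw [htdef, div_pow, hc]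
  have hRn : (4:ℝ) * R^2 * n ≠ 0 := by positivity
  have hnb : (n:ℝ) * β = (3/16) * q^2 := by
    rw [hβ, hb]; field_simp; ring
  have ha : t * (R * Real.sqrt n) = q / 2 := by
    rw [htdef]
    have h2 : 2 * R * Real.sqrt n ≠ 0 := by positivity
    field_simp
  have hte : t * ε = (q / 2) * (1 + q) := by
    rw [hεdef, show R * (1 + q) * Real.sqrt n = (1 + q) * (R * Real.sqrt n) from by ring,
      show t * ((1 + q) * (R * Real.sqrt n)) = (t * (R * Real.sqrt n)) * (1 + q) from by ring, ha]
  have hexp : -t * ε + ((n:ℝ) * β + t * (R * Real.sqrt n)) ≤ -q^2/4 := by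
    rw [hnb, ha]
    have : -t * ε = -(t * ε) := by ring
    rw [this, hte]
    nlinarith [sq_nonneg q]
  -- final real bound
  have hfinal : (P {ω | ε ≤ ‖S n ω‖}).toReal ≤ Real.exp (-q^2/4) := by
    have h1 : (1 + β)^n ≤ Real.exp ((n:ℝ) * β) := by
      have h2 : (1:ℝ) + β ≤ Real.exp β := by linarith [Real.add_one_le_exp β]
      calc (1 + β)^n ≤ (Real.exp β)^n := pow_le_pow_left₀ (by linarith) h2 n
      _ = Real.exp ((n:ℝ) * β) := by rw [← Real.exp_nat_mul]
    have h3 : Real.exp (t * F 0 0) ≤ Real.exp (t * (R * Real.sqrt n)) :=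
      Real.exp_le_exp.mpr (mul_le_mul_of_nonneg_left hM ht)
    have h4 : mgf (fun ω => ‖S n ω‖) P t
        ≤ Real.exp ((n:ℝ) * β) * Real.exp (t * (R * Real.sqrt n)) := by
      calc mgf (fun ω => ‖S n ω‖) P t ≤ (1 + β)^n * Real.exp (t * F 0 0) := hmgf
      _ ≤ Real.exp ((n:ℝ) * β) * Real.exp (t * (R * Real.sqrt n)) := by
          refine mul_le_mul h1 h3 (Real.exp_pos _).le (Real.exp_pos _).le
    calc (P {ω | ε ≤ ‖S n ω‖}).toReal ≤ Real.exp (-t * ε) * mgf (fun ω => ‖S n ω‖) P t := hmark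
    _ ≤ Real.exp (-t * ε) * (Real.exp ((n:ℝ) * β) * Real.exp (t * (R * Real.sqrt n))) :=
        mul_le_mul_of_nonneg_left h4 (Real.exp_pos _).le
    _ = Real.exp (-t * ε + ((n:ℝ) * β + t * (R * Real.sqrt n))) := by
        rw [← Real.exp_add, ← Real.exp_add]
    _ ≤ Real.exp (-q^2/4) := Real.exp_le_exp.mpr hexp
  -- identify the events
  have hful : Finset.univ.filter (fun j : Fin n => (j : ℕ) < n) = Finset.univ := by
    ext j; simp [j.isLt]
  have hev : ∀ v : EuclideanSpace ℝ (Fin d),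
      (R * (1 + q) / Real.sqrt n ≤ ‖(n : ℝ)⁻¹ • v‖) ↔ (ε ≤ ‖v‖) := by
    intro v
    rw [norm_smul, show ‖(n:ℝ)⁻¹‖ = (n:ℝ)⁻¹ from by
      rw [Real.norm_eq_abs, abs_of_nonneg (by positivity)]]
    have hh : (n:ℝ)⁻¹ * ‖v‖ * Real.sqrt n = ‖v‖ / Real.sqrt n := by
      rw [eq_div_iff hsq.ne', show (n:ℝ)⁻¹ * ‖v‖ * Real.sqrt n * Real.sqrt n = (n:ℝ)⁻¹ * ‖v‖ * (Real.sqrt n * Real.sqrt n) by ring, hsn, mul_comm, ← mul_assoc, mul_inv_cancel₀ hn0.ne', one_mul]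
    rw [div_le_iff₀ hsq, hh, le_div_iff₀ hsq, hεdef]
  have hall : ∀ᵐ ω ∂P, ∀ i, x i ω = x' i ω := ae_all_iff.mpr fun i => hxx' i
  have hsetae : {ω | R * (1 + q) / Real.sqrt n ≤ ‖(n : ℝ)⁻¹ • ∑ i, x i ω‖}
      =ᵐ[P] {ω | ε ≤ ‖S n ω‖} := by
    filter_upwards [hall] with ω hω
    have hsum : (∑ i, x i ω) = S n ω := by
      rw [hSapp n ω, hful]
      exact Finset.sum_congr rfl fun i _ => hω i
    show (R * (1 + q) / Real.sqrt n ≤ ‖(n : ℝ)⁻¹ • ∑ i, x i ω‖) = (ε ≤ ‖S n ω‖)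
    rw [eq_iff_iff, hsum]
    exact hev (S n ω)
  rw [show P {ω | R * (1 + q) / Real.sqrt n ≤ ‖(n : ℝ)⁻¹ • ∑ i, x i ω‖}
      = P {ω | ε ≤ ‖S n ω‖} from measure_congr hsetae]
  rw [← ENNReal.ofReal_toReal (measure_ne_top P {ω | ε ≤ ‖S n ω‖})]
  exact ENNReal.ofReal_le_ofReal hfinal
end

section
/- Let H be a real inner product space, let w, w* ∈ H, let M ≥ 1, let Δ₁, …, Δ_M ∈ H, let ε̄ ∈ H, and let α, η ∈ ℝ. Define Δ̄ = (1/M)·Σ_{i=1}^M Δ_i and c̄ = Δ̄ + ε̄. If the approximate projection condition (1/M)·Σ_{i=1}^M ‖w + Δ_i − w*‖² = (1 − α)·‖w − w*‖² holds, then ‖w + η·c̄ − w*‖² = (1 − α·η)·‖w − w*‖² − (η/M)·Σ_{i=1}^M ‖Δ_i‖² + η²·‖c̄‖² + 2η·⟨ε̄, w − w*⟩. -/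
open scoped RealInnerProductSpace

/-- Deterministic content of Lemma A.4: under the approximate projection condition,
with `Δ̄ = (1/M) Σ Δᵢ` and `c̄ = Δ̄ + ε̄`, the updated iterate satisfies
`‖w + η c̄ - w*‖² = (1 - αη) ‖w - w*‖² - (η/M) Σ ‖Δᵢ‖² + η² ‖c̄‖² + 2η ⟨ε̄, w - w*⟩`. -/
theorem approx_projection_decrease {H : Type*} [NormedAddCommGroup H]
    [InnerProductSpace ℝ H] (M : ℕ) (hM : 1 ≤ M) (w wstar : H) (Δ : Fin M → H)
    (εbar : H) (α η : ℝ)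
    (Δbar : H) (hΔbar : Δbar = (M : ℝ)⁻¹ • ∑ i, Δ i)
    (cbar : H) (hcbar : cbar = Δbar + εbar)
    (hproj : (1 / M : ℝ) * ∑ i, ‖w + Δ i - wstar‖ ^ 2 = (1 - α) * ‖w - wstar‖ ^ 2) :
    ‖w + η • cbar - wstar‖ ^ 2 =
      (1 - α * η) * ‖w - wstar‖ ^ 2 - (η / M) * ∑ i, ‖Δ i‖ ^ 2
        + η ^ 2 * ‖cbar‖ ^ 2 + 2 * η * ⟪εbar, w - wstar⟫ := by
  have hM0 : (M : ℝ) ≠ 0 := by positivity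
  set x := w - wstar with hx
  have hexp : ∀ i, ‖w + Δ i - wstar‖ ^ 2 = ‖x‖ ^ 2 + 2 * ⟪x, Δ i⟫ + ‖Δ i‖ ^ 2 := by
    intro i
    have h : w + Δ i - wstar = x + Δ i := by rw [hx]; abel
    rw [h, @norm_add_sq_real]
  have hsum : ∑ i, ‖w + Δ i - wstar‖ ^ 2
      = (M : ℝ) * ‖x‖ ^ 2 + 2 * ⟪x, ∑ i, Δ i⟫ + ∑ i, ‖Δ i‖ ^ 2 := by
    simp only [hexp, Finset.sum_add_distrib, Finset.sum_const, Finset.card_univ,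
      Fintype.card_fin, nsmul_eq_mul, inner_sum, Finset.mul_sum]
  have hkey : 2 * ⟪x, Δbar⟫ = -α * ‖x‖ ^ 2 - (M : ℝ)⁻¹ * ∑ i, ‖Δ i‖ ^ 2 := by
    have hib : ⟪x, Δbar⟫ = (M : ℝ)⁻¹ * ⟪x, ∑ i, Δ i⟫ := by
      rw [hΔbar, real_inner_smul_right]
    rw [hsum] at hproj
    rw [hib]
    field_simp at hproj ⊢
    linarith
  have hfin : w + η • cbar - wstar = x + η • cbar := by rw [hx]; abel
  rw [hfin, @norm_add_sq_real, norm_smul, real_inner_smul_right, hcbar, inner_add_right,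
    mul_pow]
  have h2 : ⟪εbar, x⟫ = ⟪x, εbar⟫ := real_inner_comm _ _
  rw [h2]
  simp only [Real.norm_eq_abs, sq_abs]
  linear_combination η * hkey
end

section
/- Let F : ℝ^d → ℝ be differentiable with L-Lipschitz gradient (L-smooth), i.e., ‖∇F(x) − ∇F(y)‖ ≤ L‖x − y‖ for all x, y ∈ ℝ^d. Let w ∈ ℝ^d, let u ∈ ℝ^d with u ≠ 0, let γ > 0 and S ≥ 0, and set η = max{1, S/‖u‖²} and w' = w − γ·η·u. Then F(w') − F(w) ≤ −γ·η·( ⟨∇F(w), u⟩ − (γ·L/2)·max{S, ‖u‖²} ). -/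
open scoped RealInnerProductSpace

lemma descent_lemma {E : Type*} [NormedAddCommGroup E] [InnerProductSpace ℝ E] [CompleteSpace E]
    (F : E → ℝ) (L : ℝ) (hdiff : Differentiable ℝ F)
    (hlip : ∀ x y, ‖gradient F x - gradient F y‖ ≤ L * ‖x - y‖)
    (w v : E) : F (w + v) ≤ F w + ⟪gradient F w, v⟫ + L / 2 * ‖v‖ ^ 2 := by
  set g : ℝ → ℝ := fun t => F (w + t • v) with hg
  have hc : ∀ t : ℝ, HasDerivAt (fun s : ℝ => w + s • v) v t := fun t => by
    simpa using ((hasDerivAt_id t).smul_const v).const_add w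
  have hgd : ∀ t : ℝ, HasDerivAt g ⟪gradient F (w + t • v), v⟫ t := by
    intro t
    have h1 := ((hdiff (w + t • v)).hasGradientAt).hasFDerivAt
    simpa [hg, Function.comp_def] using h1.comp_hasDerivAt t (hc t)
  have hlipgrad : LipschitzWith (Real.toNNReal L) (gradient F) := by
    apply LipschitzWith.of_dist_le_mul
    intro x y
    rw [dist_eq_norm, dist_eq_norm]
    calc ‖gradient F x - gradient F y‖ ≤ L * ‖x - y‖ := hlip x y
      _ ≤ Real.toNNReal L * ‖x - y‖ := by
          have : L ≤ (Real.toNNReal L : ℝ) := Real.le_coe_toNNReal L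
          nlinarith [norm_nonneg (x - y)]

  have hcont : Continuous fun t : ℝ => ⟪gradient F (w + t • v), v⟫ := by
    apply Continuous.inner _ continuous_const
    exact hlipgrad.continuous.comp (by continuity)
  have hint : IntervalIntegrable (fun t : ℝ => ⟪gradient F (w + t • v), v⟫)
      MeasureTheory.volume 0 1 := hcont.intervalIntegrable 0 1
  have hftc : ∫ t in (0:ℝ)..1, ⟪gradient F (w + t • v), v⟫ = g 1 - g 0 :=
    intervalIntegral.integral_eq_sub_of_hasDerivAt (fun t _ => hgd t) hint
  have hbound : ∀ t ∈ Set.Icc (0:ℝ) 1,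
      ⟪gradient F (w + t • v), v⟫ ≤ ⟪gradient F w, v⟫ + (L * ‖v‖ ^ 2) * t := by
    intro t ht
    have h1 : ⟪gradient F (w + t • v) - gradient F w, v⟫ ≤ L * ‖v‖ ^ 2 * t := by
      calc ⟪gradient F (w + t • v) - gradient F w, v⟫
          ≤ ‖gradient F (w + t • v) - gradient F w‖ * ‖v‖ := real_inner_le_norm _ _
        _ ≤ (L * ‖w + t • v - w‖) * ‖v‖ := by
            exact mul_le_mul_of_nonneg_right (hlip _ _) (norm_nonneg v)
        _ = L * ‖v‖ ^ 2 * t := by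
            rw [add_sub_cancel_left, norm_smul, Real.norm_eq_abs, abs_of_nonneg ht.1]
            ring
    have := inner_sub_left (𝕜 := ℝ) (gradient F (w + t • v)) (gradient F w) v
    linarith [h1, this ▸ h1]
  have hmono : ∫ t in (0:ℝ)..1, ⟪gradient F (w + t • v), v⟫
      ≤ ∫ t in (0:ℝ)..1, (⟪gradient F w, v⟫ + (L * ‖v‖ ^ 2) * t) := by
    apply intervalIntegral.integral_mono_on zero_le_one hint
    · exact (Continuous.intervalIntegrable (by continuity) 0 1)
    · exact hbound
  have hval : ∫ t in (0:ℝ)..1, (⟪gradient F w, v⟫ + (L * ‖v‖ ^ 2) * t)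
      = ⟪gradient F w, v⟫ + L / 2 * ‖v‖ ^ 2 := by
    rw [intervalIntegral.integral_add (intervalIntegrable_const)
      ((intervalIntegral.intervalIntegrable_id).const_mul _),
      intervalIntegral.integral_const, intervalIntegral.integral_const_mul, integral_id]
    simp; ring
  have : g 1 - g 0 ≤ ⟪gradient F w, v⟫ + L / 2 * ‖v‖ ^ 2 := by
    rw [← hftc]; rw [hval] at hmono; exact hmono
  simp only [hg, one_smul, zero_smul, add_zero] at this
  linarith

/-- Per-round descent inequality for the DP-FedEXP adaptive step size: for an `L`-smooth
`F`, with `η = max{1, S/‖u‖²}` and `w' = w - γηu`,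
`F(w') - F(w) ≤ -γη (⟨∇F(w), u⟩ - (γL/2) max{S, ‖u‖²})`. -/
theorem fedexp_descent {d : ℕ} (F : EuclideanSpace ℝ (Fin d) → ℝ) (L : ℝ)
    (hdiff : Differentiable ℝ F)
    (hlip : ∀ x y, ‖gradient F x - gradient F y‖ ≤ L * ‖x - y‖)
    (w u : EuclideanSpace ℝ (Fin d)) (hu : u ≠ 0) (γ S : ℝ) (hγ : 0 < γ) (hS : 0 ≤ S)
    (η : ℝ) (hη : η = max 1 (S / ‖u‖ ^ 2))
    (w' : EuclideanSpace ℝ (Fin d)) (hw' : w' = w - (γ * η) • u) :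
    F w' - F w ≤ -(γ * η) * (⟪gradient F w, u⟫ - (γ * L / 2) * max S (‖u‖ ^ 2)) := by
  have hu2 : (0:ℝ) < ‖u‖ ^ 2 := by have := norm_pos_iff.mpr hu; positivity
  have hkey : η * ‖u‖ ^ 2 = max S (‖u‖ ^ 2) := by
    rw [hη, max_mul_of_nonneg _ _ (le_of_lt hu2), one_mul, div_mul_cancel₀ _ (ne_of_gt hu2),
      max_comm]
  have hdesc := descent_lemma F L hdiff hlip w (-((γ * η) • u))
  rw [show w + -((γ * η) • u) = w - (γ * η) • u by abel] at hdesc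
  rw [hw']
  have h1 : ⟪gradient F w, -((γ * η) • u)⟫ = -(γ * η) * ⟪gradient F w, u⟫ := by
    rw [inner_neg_right, real_inner_smul_right]; ring
  have h2 : ‖-((γ * η) • u)‖ ^ 2 = (γ * η) ^ 2 * ‖u‖ ^ 2 := by
    rw [norm_neg, norm_smul, mul_pow, Real.norm_eq_abs, sq_abs]
  rw [h1, h2] at hdesc
  have hηpos : (0:ℝ) < η := by rw [hη]; exact lt_of_lt_of_le one_pos (le_max_left _ _)
  have : L / 2 * ((γ * η) ^ 2 * ‖u‖ ^ 2) = (γ * η) * ((γ * L / 2) * max S (‖u‖ ^ 2)) := by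
    rw [← hkey]; ring
  rw [this] at hdesc
  nlinarith [hdesc]
end

section
/- Let H be a real inner product space, let M ≥ 1, let g₁, …, g_M, h₁, …, h_M ∈ H, let ε ∈ H, and set g = (1/M)·Σ_{i=1}^M g_i and h̄ = (1/M)·Σ_{i=1}^M h_i. Then ⟨g, h̄ + ε⟩ ≥ (1/4)·‖g‖² − (1/(2M))·Σ_{i=1}^M ‖g_i − h_i‖² − ‖ε‖². -/
open scoped RealInnerProductSpace

/-- Alignment lower bound used in Theorems 4.3 and 4.4: with `g = (1/M) Σ gᵢ` and
`h̄ = (1/M) Σ hᵢ`, one has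
`⟨g, h̄ + ε⟩ ≥ (1/4)‖g‖² - (1/(2M)) Σ ‖gᵢ - hᵢ‖² - ‖ε‖²`. -/
theorem alignment_lower_bound {H : Type*} [NormedAddCommGroup H] [InnerProductSpace ℝ H]
    (M : ℕ) (hM : 1 ≤ M) (g' h : Fin M → H) (ε : H)
    (g : H) (hg : g = (M : ℝ)⁻¹ • ∑ i, g' i)
    (hbar : H) (hhbar : hbar = (M : ℝ)⁻¹ • ∑ i, h i) :
    ⟪g, hbar + ε⟫ ≥
      (1 / 4 : ℝ) * ‖g‖ ^ 2 - (1 / (2 * M) : ℝ) * ∑ i, ‖g' i - h i‖ ^ 2 - ‖ε‖ ^ 2 := by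
  have hM0 : (0 : ℝ) < M := by exact_mod_cast hM
  set S := ∑ i, ‖g' i - h i‖ ^ 2 with hS
  have hdiff : g - hbar = (M : ℝ)⁻¹ • ∑ i, (g' i - h i) := by
    rw [hg, hhbar, ← smul_sub, ← Finset.sum_sub_distrib]
  have h1 : ‖g - hbar‖ ^ 2 ≤ (M : ℝ)⁻¹ * S := by
    have hn : ‖g - hbar‖ ≤ (M : ℝ)⁻¹ * ∑ i, ‖g' i - h i‖ := by
      rw [hdiff, norm_smul, norm_inv, Real.norm_natCast]
      exact mul_le_mul_of_nonneg_left (norm_sum_le _ _) (inv_nonneg.mpr hM0.le)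
    have hcs : (∑ i, ‖g' i - h i‖) ^ 2 ≤ (M : ℝ) * S := by
      have := sq_sum_le_card_mul_sum_sq (s := Finset.univ) (f := fun i => ‖g' i - h i‖)
      simpa using this
    have h2 : ‖g - hbar‖ ^ 2 ≤ ((M : ℝ)⁻¹ * ∑ i, ‖g' i - h i‖) ^ 2 :=
      pow_le_pow_left₀ (norm_nonneg _) hn 2
    calc ‖g - hbar‖ ^ 2 ≤ ((M : ℝ)⁻¹ * ∑ i, ‖g' i - h i‖) ^ 2 := h2
      _ = (M : ℝ)⁻¹ * (M : ℝ)⁻¹ * (∑ i, ‖g' i - h i‖) ^ 2 := by ring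
      _ ≤ (M : ℝ)⁻¹ * (M : ℝ)⁻¹ * ((M : ℝ) * S) := by
          apply mul_le_mul_of_nonneg_left hcs
          positivity
      _ = (M : ℝ)⁻¹ * S := by field_simp
  have key : ⟪g, hbar + ε⟫ = ‖g‖ ^ 2 - ⟪g, g - hbar⟫ + ⟪g, ε⟫ := by
    rw [inner_add_right, inner_sub_right, real_inner_self_eq_norm_sq]; ring
  have c1 : ⟪g, g - hbar⟫ ≤ ‖g‖ * ‖g - hbar‖ := real_inner_le_norm g (g - hbar)
  have c2 : -(‖g‖ * ‖ε‖) ≤ ⟪g, ε⟫ := neg_le_of_abs_le (abs_real_inner_le_norm g ε)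
  have hhalf : (1 / (2 * (M : ℝ))) = 2⁻¹ * (M : ℝ)⁻¹ := by
    rw [one_div, mul_inv]
  rw [key, hhalf]
  nlinarith [sq_nonneg (‖g‖ - ‖g - hbar‖), sq_nonneg (‖g‖ - 2 * ‖ε‖), h1,
    norm_nonneg (g - hbar), norm_nonneg g, norm_nonneg ε]
end
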